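/- A priori H¹-bound for the regularized periodic problem, uniform in μ and ε (Theorem 2.4, estimate (2.12)): fix ν > 0, γ > 0 and a bounded continuous g : ℝ² → ℝ, and let C_F be a Friedrichs constant for Ω. Then there exists K ≥ 0, depending only on Ω, Φ, C_F, ν, γ, sup|g|, the Lebesgue measure |Ω| and σ(∂Ω), such that the following holds: for every μ > 0, every ε ∈ (0,1], every i ∈ {0,1}, every pair of coefficients A : ℝ×ℝ² → ℝ, C : ℝ×ℝ² → ℝ² that are C¹ on an open set containing ℝ×closure(Ω), 1-periodic in θ, and satisfy 0 ≤ A ≤ γ and ‖C‖ ≤ γ there, and every S that is C¹ in θ, C² in x on an open set containing ℝ×closure(Ω), 1-periodic in θ, and satisfies μS + ∂S/∂θ − (1/εⁱ)∇·((A(θ,·)+ν)∇S(θ,·)) = (1/εⁱ)∇·C(θ,·) pointwise in Ω and ∂S/∂n + S = g pointwise on ∂Ω for every θ, one has ∫₀¹ ∫_Ω ( S(θ,x)² + ‖∇S(θ,x)‖² ) dx dθ ≤ K. -/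

import Mathlib

open MeasureTheory Set Real
open scoped RealInnerProductSpace

noncomputable section

abbrev E2 : Type := EuclideanSpace ℝ (Fin 2)

/-- Divergence of a vector field on the plane. -/
def vdiv (F : E2 → E2) (x : E2) : ℝ := ∑ i, fderiv ℝ F x (EuclideanSpace.single i 1) i

/-- A nonempty bounded open set in the plane with `C¹` boundary described by a defining
function `Φ`. -/
structure C1Domain where
  Ω : Set E2
  Φ : E2 → ℝ
  nonempty : Ω.Nonempty
  bounded : Bornology.IsBounded Ω
  isOpen : IsOpen Ω
  smoothΦ : ContDiff ℝ 1 Φ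
  eq_dom : Ω = {x | Φ x < 0}
  eq_bd : frontier Ω = {x | Φ x = 0}
  grad_ne : ∀ x ∈ frontier Ω, gradient Φ x ≠ 0

/-- Outward unit normal. -/
def nml (D : C1Domain) (x : E2) : E2 := ‖gradient D.Φ x‖⁻¹ • gradient D.Φ x

/-- The divergence theorem holds on the domain. -/
def DivergenceThm (D : C1Domain) : Prop :=
  ∀ F : E2 → E2, (∃ U : Set E2, IsOpen U ∧ closure D.Ω ⊆ U ∧ ContDiffOn ℝ 1 F U) →
    (∫ x in D.Ω, vdiv F x) = ∫ x in frontier D.Ω, ⟪F x, nml D x⟫ ∂μH[1]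

/-- `CF` is a Friedrichs constant for the domain. -/
def IsFriedrichs (D : C1Domain) (CF : ℝ) : Prop :=
  0 < CF ∧ ∀ u : E2 → ℝ, (∃ U : Set E2, IsOpen U ∧ closure D.Ω ⊆ U ∧ ContDiffOn ℝ 1 u U) →
    (∫ x in D.Ω, (u x) ^ 2) ≤
      CF * ((∫ x in D.Ω, ‖gradient u x‖ ^ 2) + ∫ x in frontier D.Ω, (u x) ^ 2 ∂μH[1])

/-- `S(θ,x)` is `C¹` in `θ` and `C²` in `x` on an open set containing `ℝ × closure Ω`,
and is `1`-periodic in `θ`. -/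
def PeriodicReg (D : C1Domain) (S : ℝ → E2 → ℝ) : Prop :=
  (∃ U : Set (ℝ × E2), IsOpen U ∧ ((univ : Set ℝ) ×ˢ closure D.Ω) ⊆ U ∧
    ContDiffOn ℝ 1 (fun p : ℝ × E2 => S p.1 p.2) U ∧
    ∀ θ : ℝ, ContDiffOn ℝ 2 (fun x => S θ x) {x | (θ, x) ∈ U}) ∧
  ∀ θ x, S (θ + 1) x = S θ x

/-! ### Auxiliary lemmas -/

lemma young (t a b : ℝ) (ht : 0 < t) : a * b ≤ t/2 * a^2 + b^2/(2*t) := by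
  have h : 2*t*(a*b) ≤ t^2*a^2 + b^2 := by nlinarith [sq_nonneg (t*a - b)]
  have h2t : (0:ℝ) < 2*t := by linarith
  calc a * b = (2*t*(a*b))/(2*t) := by field_simp
    _ ≤ (t^2*a^2 + b^2)/(2*t) := by exact (div_le_div_iff_of_pos_right h2t).mpr h
    _ = t/2 * a^2 + b^2/(2*t) := by field_simp

lemma gradient_inner_eq (f : E2 → ℝ) (x v : E2) : ⟪gradient f x, v⟫ = fderiv ℝ f x v :=
  InnerProductSpace.toDual_symm_apply

lemma gradient_coord (f : E2 → ℝ) (x : E2) (i : Fin 2) :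
    gradient f x i = fderiv ℝ f x (EuclideanSpace.single i 1) := by
  rw [← gradient_inner_eq, EuclideanSpace.inner_single_right]
  simp

lemma vdiv_add (F G : E2 → E2) (x : E2) (hF : DifferentiableAt ℝ F x)
    (hG : DifferentiableAt ℝ G x) :
    vdiv (fun y => F y + G y) x = vdiv F x + vdiv G x := by
  unfold vdiv
  rw [fderiv_fun_add hF hG]
  simp [Finset.sum_add_distrib]

lemma vdiv_smul (f : E2 → ℝ) (F : E2 → E2) (x : E2) (hf : DifferentiableAt ℝ f x)
    (hF : DifferentiableAt ℝ F x) :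
    vdiv (fun y => f y • F y) x = ⟪gradient f x, F x⟫ + f x * vdiv F x := by
  unfold vdiv
  rw [fderiv_fun_smul hf hF]
  have h : ⟪gradient f x, F x⟫ = ∑ i, fderiv ℝ f x (EuclideanSpace.single i 1) * F x i := by
    rw [PiLp.inner_apply]
    congr 1; ext i
    rw [← gradient_coord]; simp [mul_comm]
  rw [h, Finset.mul_sum, ← Finset.sum_add_distrib]
  congr 1; ext i
  simp [PiLp.smul_apply, mul_comm]
  ring

lemma slice_hasFDerivAt {F : ℝ × E2 → ℝ} {p : ℝ × E2} (hd : DifferentiableAt ℝ F p) :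
    HasFDerivAt (fun y => F (p.1, y))
      ((fderiv ℝ F p).comp (ContinuousLinearMap.inr ℝ ℝ E2)) p.2 :=
  hd.hasFDerivAt.comp p.2 (hasFDerivAt_prodMk_right p.1 p.2)

lemma slice_gradient {F : ℝ × E2 → ℝ} {p : ℝ × E2} (hd : DifferentiableAt ℝ F p) :
    gradient (fun y => F (p.1, y)) p.2 =
      (InnerProductSpace.toDual ℝ E2).symm
        ((fderiv ℝ F p).comp (ContinuousLinearMap.inr ℝ ℝ E2)) := by
  unfold gradient
  rw [(slice_hasFDerivAt hd).fderiv]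

lemma slice_hasDerivAt {F : ℝ × E2 → ℝ} {p : ℝ × E2} (hd : DifferentiableAt ℝ F p) :
    HasDerivAt (fun s => F (s, p.2)) (fderiv ℝ F p (1, 0)) p.1 := by
  have h := hd.hasFDerivAt.comp p.1 (hasFDerivAt_prodMk_left (𝕜 := ℝ) p.1 p.2)
  exact h.hasDerivAt

lemma contOn_gradient_slice {F : ℝ × E2 → ℝ} {U : Set (ℝ × E2)} (hUo : IsOpen U)
    (hF : ContDiffOn ℝ 1 F U) :
    ContinuousOn (fun p : ℝ × E2 => gradient (fun y => F (p.1, y)) p.2) U := by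
  have h1 : ContinuousOn (fun p : ℝ × E2 =>
      (InnerProductSpace.toDual ℝ E2).symm
        ((fderiv ℝ F p).comp (ContinuousLinearMap.inr ℝ ℝ E2))) U := by
    apply (LinearIsometryEquiv.continuous _).comp_continuousOn
    exact (hF.continuousOn_fderiv_of_isOpen hUo le_rfl).clm_comp continuousOn_const
  refine h1.congr fun p hp => ?_
  exact slice_gradient ((hF.contDiffAt (hUo.mem_nhds hp)).differentiableAt one_ne_zero)

lemma contOn_deriv_slice {F : ℝ × E2 → ℝ} {U : Set (ℝ × E2)} (hUo : IsOpen U)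
    (hF : ContDiffOn ℝ 1 F U) :
    ContinuousOn (fun p : ℝ × E2 => deriv (fun s => F (s, p.2)) p.1) U := by
  have h1 : ContinuousOn (fun p : ℝ × E2 => fderiv ℝ F p (1, 0)) U :=
    (hF.continuousOn_fderiv_of_isOpen hUo le_rfl).clm_apply continuousOn_const
  refine h1.congr fun p hp => ?_
  exact (slice_hasDerivAt ((hF.contDiffAt (hUo.mem_nhds hp)).differentiableAt one_ne_zero)).deriv

lemma integrableOn_of_contOn_nhd {Ω : Set E2} (hb : Bornology.IsBounded Ω) {V : Set E2}
    (hV : closure Ω ⊆ V) {f : E2 → ℝ} (hf : ContinuousOn f V) : IntegrableOn f Ω volume :=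
  ((hf.mono hV).integrableOn_compact hb.isCompact_closure).mono_set subset_closure

lemma integrableOn_of_compact_finite {Γ : Set E2} (hΓc : IsCompact Γ) (hΓm : MeasurableSet Γ)
    (hfin : μH[1] Γ < ⊤) {f : E2 → ℝ} (hf : ContinuousOn f Γ) :
    IntegrableOn f Γ μH[1] := by
  haveI : IsFiniteMeasure ((μH[1] : Measure E2).restrict Γ) :=
    ⟨by rwa [Measure.restrict_apply_univ]⟩
  obtain ⟨Cb, hCb⟩ := hΓc.exists_bound_of_continuousOn hf
  refine Integrable.mono' (integrable_const Cb) (hf.aestronglyMeasurable hΓm) ?_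
  filter_upwards [ae_restrict_mem hΓm] with x hx using hCb x hx

lemma integrable_prod_of_contOn {Ω : Set E2} (hb : Bornology.IsBounded Ω)
    {U : Set (ℝ × E2)} (hU : (Set.Icc (0:ℝ) 1) ×ˢ closure Ω ⊆ U) {h : ℝ × E2 → ℝ}
    (hc : ContinuousOn h U) :
    Integrable h ((volume.restrict (Set.Ioc (0:ℝ) 1)).prod (volume.restrict Ω)) := by
  rw [Measure.prod_restrict]
  have hcomp : IsCompact ((Set.Icc (0:ℝ) 1) ×ˢ closure Ω) :=
    isCompact_Icc.prod hb.isCompact_closure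
  have h1 : IntegrableOn h ((Set.Icc (0:ℝ) 1) ×ˢ closure Ω) volume := by
    rw [Measure.volume_eq_prod]
    exact (hc.mono hU).integrableOn_compact hcomp
  rw [Measure.volume_eq_prod] at h1
  exact h1.mono_set (Set.prod_mono Set.Ioc_subset_Icc_self subset_closure)

set_option maxHeartbeats 1000000 in
/-- a priori `H¹` bound for the regularized periodic problem, uniform in
`μ` and `ε` (Theorem 2.4, estimate (2.12)). -/
theorem stmt7
    (D : C1Domain) (hdiv : DivergenceThm D)
    (ν γ : ℝ) (hν : 0 < ν) (hγ : 0 < γ)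
    (g : E2 → ℝ) (hg : Continuous g) (hgbd : ∃ M : ℝ, ∀ x, |g x| ≤ M)
    (CF : ℝ) (hCF : IsFriedrichs D CF) :
    ∃ K : ℝ, 0 ≤ K ∧
      ∀ (μ : ℝ), 0 < μ →
      ∀ ε ∈ Ioc (0:ℝ) 1, ∀ i : ℕ, i = 0 ∨ i = 1 →
      ∀ (A : ℝ → E2 → ℝ) (C : ℝ → E2 → E2) (UA : Set (ℝ × E2)),
        IsOpen UA → (univ : Set ℝ) ×ˢ closure D.Ω ⊆ UA →
        ContDiffOn ℝ 1 (fun p : ℝ × E2 => A p.1 p.2) UA →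
        ContDiffOn ℝ 1 (fun p : ℝ × E2 => C p.1 p.2) UA →
        (∀ θ x, A (θ + 1) x = A θ x) → (∀ θ x, C (θ + 1) x = C θ x) →
        (∀ p ∈ UA, 0 ≤ A (Prod.fst p) (Prod.snd p) ∧ A (Prod.fst p) (Prod.snd p) ≤ γ) →
        (∀ p ∈ UA, ‖C (Prod.fst p) (Prod.snd p)‖ ≤ γ) →
      ∀ S : ℝ → E2 → ℝ, PeriodicReg D S →
        (∀ θ : ℝ, ∀ x ∈ D.Ω,
          μ * S θ x + deriv (fun s => S s x) θ
              - (1 / ε ^ i) * vdiv (fun y => (A θ y + ν) • gradient (S θ) y) x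
            = (1 / ε ^ i) * vdiv (C θ) x) →
        (∀ θ : ℝ, ∀ x ∈ frontier D.Ω,
          ⟪gradient (S θ) x, nml D x⟫ + S θ x = g x) →
        (∫ θ in (0:ℝ)..1, ∫ x in D.Ω, ((S θ x) ^ 2 + ‖gradient (S θ) x‖ ^ 2)) ≤ K := by
  obtain ⟨M0, hM0⟩ := hgbd
  set M : ℝ := max M0 0 with hMdef
  have hMnn : 0 ≤ M := le_max_right _ _
  have hgM : ∀ x, |g x| ≤ M := fun x => (hM0 x).trans (le_max_left _ _)
  have hΩfin : volume D.Ω < ⊤ := D.bounded.measure_lt_top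
  have hΩpos : 0 < (volume D.Ω).toReal :=
    ENNReal.toReal_pos (D.isOpen.measure_pos volume D.nonempty).ne' hΩfin.ne
  have hΓfin : μH[1] (frontier D.Ω) < ⊤ := by
    by_contra h
    push_neg at h
    have htop : μH[1] (frontier D.Ω) = ⊤ := top_le_iff.mp h
    have h1 := hCF.2 (fun _ => 1) ⟨univ, isOpen_univ, subset_univ _, contDiffOn_const⟩
    have hgrad : ∀ x : E2, ‖gradient (fun _ : E2 => (1:ℝ)) x‖ ^ 2 = 0 := by
      intro x; rw [show gradient (fun _ : E2 => (1:ℝ)) x = 0 from gradient_const x 1]; simp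
    simp only [one_pow, hgrad] at h1
    rw [setIntegral_const, setIntegral_const, setIntegral_const, measureReal_def, measureReal_def, htop] at h1
    simp only [ENNReal.toReal_top, zero_smul, smul_eq_mul, mul_one, smul_zero, zero_add,
      add_zero, mul_zero] at h1
    linarith
  have hΓcomp : IsCompact (frontier D.Ω) :=
    D.bounded.isCompact_closure.of_isClosed_subset isClosed_frontier frontier_subset_closure
  have hΓmeas : MeasurableSet (frontier D.Ω) := isClosed_frontier.measurableSet
  have hΩmeas : MeasurableSet D.Ω := D.isOpen.measurableSet
  haveI : IsFiniteMeasure ((μH[1] : Measure E2).restrict (frontier D.Ω)) :=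
    ⟨by rwa [Measure.restrict_apply_univ]⟩
  have hgradΦ : Continuous (gradient D.Φ) := by
    exact ((InnerProductSpace.toDual ℝ E2).symm.continuous).comp
      (D.smoothΦ.continuous_fderiv one_ne_zero)
  have hnml_cont : ContinuousOn (nml D) (frontier D.Ω) := by
    unfold nml
    exact ((hgradΦ.norm.continuousOn).inv₀
      (fun x hx => norm_ne_zero_iff.2 (D.grad_ne x hx))).smul hgradΦ.continuousOn
  have hnml_norm : ∀ x ∈ frontier D.Ω, ‖nml D x‖ = 1 := by
    intro x hx
    have hne : ‖gradient D.Φ x‖ ≠ 0 := norm_ne_zero_iff.2 (D.grad_ne x hx)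
    rw [nml, norm_smul, norm_inv, norm_norm, inv_mul_cancel₀ hne]
  obtain ⟨c1, hc1def, hc1nn⟩ : ∃ c1 : ℝ, c1 = ((γ + ν) * M + γ)^2 / (2*ν) ∧ 0 ≤ c1 :=
    ⟨_, rfl, div_nonneg (sq_nonneg _) (by linarith)⟩
  obtain ⟨K1, hK1def, hK1nn⟩ : ∃ K1 : ℝ,
      K1 = γ^2/(2*ν) * (volume D.Ω).toReal + c1 * (μH[1] (frontier D.Ω)).toReal ∧ 0 ≤ K1 :=
    ⟨_, rfl, add_nonneg
      (mul_nonneg (div_nonneg (sq_nonneg _) (by linarith)) ENNReal.toReal_nonneg)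
      (mul_nonneg hc1nn ENNReal.toReal_nonneg)⟩
  obtain ⟨c2, hc2nn, hc2ν⟩ : ∃ c2 : ℝ, 0 ≤ c2 ∧ c2 * ν = 2*CF + 2 :=
    ⟨(2*CF + 2)/ν, div_nonneg (by linarith [hCF.1]) hν.le, by field_simp⟩
  refine ⟨c2 * K1, mul_nonneg hc2nn hK1nn, ?_⟩
  intro μ hμ ε hε i hi A C UA hUAo hUAsub hAc hCc hAper hCper hAbd hCbd S hS hPDE hBC
  have hη0 : 0 < ε ^ i := pow_pos hε.1 i
  obtain ⟨⟨U, hUo, hUsub, hSc, hSx⟩, hSper⟩ := hS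
  set W : Set (ℝ × E2) := U ∩ UA with hWdef
  have hWo : IsOpen W := hUo.inter hUAo
  have hmemU : ∀ (θ : ℝ) (x : E2), x ∈ closure D.Ω → (θ, x) ∈ U :=
    fun θ x hx => hUsub ⟨mem_univ θ, hx⟩
  have hmemUA : ∀ (θ : ℝ) (x : E2), x ∈ closure D.Ω → (θ, x) ∈ UA :=
    fun θ x hx => hUAsub ⟨mem_univ θ, hx⟩
  have hmemW : ∀ (θ : ℝ) (x : E2), x ∈ closure D.Ω → (θ, x) ∈ W :=
    fun θ x hx => ⟨hmemU θ x hx, hmemUA θ x hx⟩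
  have hUθo : ∀ θ : ℝ, IsOpen {x : E2 | (θ, x) ∈ U} :=
    fun θ => hUo.preimage (Continuous.prodMk_right θ)
  have hWθo : ∀ θ : ℝ, IsOpen {x : E2 | (θ, x) ∈ W} :=
    fun θ => hWo.preimage (Continuous.prodMk_right θ)
  have hUθsub : ∀ θ : ℝ, closure D.Ω ⊆ {x : E2 | (θ, x) ∈ U} := fun θ x hx => hmemU θ x hx
  have hWθsub : ∀ θ : ℝ, closure D.Ω ⊆ {x : E2 | (θ, x) ∈ W} := fun θ x hx => hmemW θ x hx
  have hθx : ∀ θ : ℝ, ContDiff ℝ 1 (fun x : E2 => (θ, x)) :=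
    fun θ => contDiff_const.prodMk contDiff_id
  -- per-θ regularity
  have hgradθ : ∀ θ : ℝ, ContDiffOn ℝ 1 (gradient (S θ)) {x : E2 | (θ, x) ∈ U} := by
    intro θ
    have h1 : ContDiffOn ℝ 1 (fderiv ℝ (S θ)) {x : E2 | (θ, x) ∈ U} :=
      (hSx θ).fderiv_of_isOpen (hUθo θ) (by norm_num)
    have h2 : ContDiff ℝ 1 ((InnerProductSpace.toDual ℝ E2).symm :
        (E2 →L[ℝ] ℝ) → E2) := (InnerProductSpace.toDual ℝ E2).symm.contDiff
    exact h2.comp_contDiffOn h1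
  have hAθ : ∀ θ : ℝ, ContDiffOn ℝ 1 (fun x => A θ x) {x : E2 | (θ, x) ∈ UA} :=
    fun θ => hAc.comp (hθx θ).contDiffOn (fun x hx => hx)
  have hCθ : ∀ θ : ℝ, ContDiffOn ℝ 1 (fun x => C θ x) {x : E2 | (θ, x) ∈ UA} :=
    fun θ => hCc.comp (hθx θ).contDiffOn (fun x hx => hx)
  have hD1θ : ∀ θ : ℝ, ContDiffOn ℝ 1 (fun y => (A θ y + ν) • gradient (S θ) y)
      {x : E2 | (θ, x) ∈ W} := by
    intro θ
    exact (((hAθ θ).mono (fun x hx => hx.2)).add contDiffOn_const).smul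
      ((hgradθ θ).mono (fun x hx => hx.1))
  have hGθ : ∀ θ : ℝ, ContDiffOn ℝ 1
      (fun y => (A θ y + ν) • gradient (S θ) y + C θ y) {x : E2 | (θ, x) ∈ W} :=
    fun θ => (hD1θ θ).add ((hCθ θ).mono (fun x hx => hx.2))
  have hFθ : ∀ θ : ℝ, ContDiffOn ℝ 1
      (fun y => S θ y • ((A θ y + ν) • gradient (S θ) y + C θ y)) {x : E2 | (θ, x) ∈ W} :=
    fun θ => (((hSx θ).of_le one_le_two).mono (fun x hx => hx.1)).smul (hGθ θ)
  -- pointwise divergence identity on Ω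
  have hvdivF : ∀ θ : ℝ, ∀ x ∈ D.Ω,
      vdiv (fun y => S θ y • ((A θ y + ν) • gradient (S θ) y + C θ y)) x
        = (A θ x + ν) * ‖gradient (S θ) x‖^2 + ⟪gradient (S θ) x, C θ x⟫
          + ε ^ i * (μ * S θ x ^ 2 + S θ x * deriv (fun s => S s x) θ) := by
    intro θ x hx
    have hxW : x ∈ {x : E2 | (θ, x) ∈ W} := hWθsub θ (subset_closure hx)
    have hxU : x ∈ {x : E2 | (θ, x) ∈ U} := hxW.1
    have hdS : DifferentiableAt ℝ (S θ) x :=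
      (((hSx θ).of_le one_le_two).contDiffAt ((hUθo θ).mem_nhds hxU)).differentiableAt one_ne_zero
    have hdG : DifferentiableAt ℝ (fun y => (A θ y + ν) • gradient (S θ) y + C θ y) x :=
      ((hGθ θ).contDiffAt ((hWθo θ).mem_nhds hxW)).differentiableAt one_ne_zero
    have hd1 : DifferentiableAt ℝ (fun y => (A θ y + ν) • gradient (S θ) y) x :=
      ((hD1θ θ).contDiffAt ((hWθo θ).mem_nhds hxW)).differentiableAt one_ne_zero
    have hdC : DifferentiableAt ℝ (C θ) x :=
      (((hCθ θ).mono (fun x hx => hx.2)).contDiffAt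
        ((hWθo θ).mem_nhds hxW)).differentiableAt one_ne_zero
    rw [vdiv_smul (S θ) (fun y => (A θ y + ν) • gradient (S θ) y + C θ y) x hdS hdG]
    rw [vdiv_add (fun y => (A θ y + ν) • gradient (S θ) y) (C θ) x hd1 hdC]
    have hpde := hPDE θ x hx
    have hsum : vdiv (fun y => (A θ y + ν) • gradient (S θ) y) x + vdiv (C θ) x
        = ε ^ i * (μ * S θ x + deriv (fun s => S s x) θ) := by
      field_simp at hpde
      linarith
    rw [hsum, inner_add_right, real_inner_smul_right, real_inner_self_eq_norm_sq]
    ring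
  -- pointwise boundary identity
  have hbnd : ∀ θ : ℝ, ∀ x ∈ frontier D.Ω,
      ⟪S θ x • ((A θ x + ν) • gradient (S θ) x + C θ x), nml D x⟫
        = S θ x * ((A θ x + ν) * (g x - S θ x) + ⟪C θ x, nml D x⟫) := by
    intro θ x hx
    rw [real_inner_smul_left, inner_add_left, real_inner_smul_left]
    have h := hBC θ x hx
    have h2 : ⟪gradient (S θ) x, nml D x⟫ = g x - S θ x := by linarith
    rw [h2]
  -- per-θ continuity on slices
  have cS : ∀ θ : ℝ, ContinuousOn (S θ) {x : E2 | (θ, x) ∈ U} :=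
    fun θ => (hSx θ).continuousOn
  have cgS : ∀ θ : ℝ, ContinuousOn (gradient (S θ)) {x : E2 | (θ, x) ∈ U} :=
    fun θ => (hgradθ θ).continuousOn
  have cd : ∀ θ : ℝ, ContinuousOn (fun x : E2 => deriv (fun s => S s x) θ)
      {x : E2 | (θ, x) ∈ U} := by
    intro θ
    have h := (contOn_deriv_slice hUo hSc).comp
      ((hθx θ).continuous.continuousOn :
        ContinuousOn (fun x : E2 => (θ, x)) {x : E2 | (θ, x) ∈ U})
      (fun x hx => hx)
    exact h.congr (fun x hx => rfl)
  have cA : ∀ θ : ℝ, ContinuousOn (fun x => A θ x) {x : E2 | (θ, x) ∈ UA} :=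
    fun θ => (hAθ θ).continuousOn
  have cC : ∀ θ : ℝ, ContinuousOn (fun x => C θ x) {x : E2 | (θ, x) ∈ UA} :=
    fun θ => (hCθ θ).continuousOn
  -- per-θ integrability on Ω
  have i1 : ∀ θ : ℝ, IntegrableOn (fun x => ‖gradient (S θ) x‖^2) D.Ω volume :=
    fun θ => integrableOn_of_contOn_nhd D.bounded (hUθsub θ) ((cgS θ).norm.pow 2)
  have i2 : ∀ θ : ℝ, IntegrableOn (fun x => (S θ x)^2) D.Ω volume :=
    fun θ => integrableOn_of_contOn_nhd D.bounded (hUθsub θ) ((cS θ).pow 2)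
  have i3 : ∀ θ : ℝ, IntegrableOn (fun x => S θ x * deriv (fun s => S s x) θ) D.Ω volume :=
    fun θ => integrableOn_of_contOn_nhd D.bounded (hUθsub θ) ((cS θ).mul (cd θ))
  have i4 : ∀ θ : ℝ, IntegrableOn (fun x =>
      (A θ x + ν) * ‖gradient (S θ) x‖^2 + ⟪gradient (S θ) x, C θ x⟫
        + ε ^ i * (μ * S θ x ^ 2 + S θ x * deriv (fun s => S s x) θ)) D.Ω volume := by
    intro θ
    refine integrableOn_of_contOn_nhd D.bounded (hWθsub θ) ?_
    have h1 : ContinuousOn (fun x => (A θ x + ν) * ‖gradient (S θ) x‖^2)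
        {x : E2 | (θ, x) ∈ W} :=
      (((cA θ).mono (fun x hx => hx.2)).add continuousOn_const).mul
        (((cgS θ).mono (fun x hx => hx.1)).norm.pow 2)
    have h2 : ContinuousOn (fun x => ⟪gradient (S θ) x, C θ x⟫) {x : E2 | (θ, x) ∈ W} :=
      ((cgS θ).mono (fun x hx => hx.1)).inner ((cC θ).mono (fun x hx => hx.2))
    have h3 : ContinuousOn (fun x => ε ^ i * (μ * S θ x ^ 2
        + S θ x * deriv (fun s => S s x) θ)) {x : E2 | (θ, x) ∈ W} :=
      continuousOn_const.mul ((continuousOn_const.mul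
        (((cS θ).mono (fun x hx => hx.1)).pow 2)).add
        (((cS θ).mono (fun x hx => hx.1)).mul ((cd θ).mono (fun x hx => hx.1))))
    exact (h1.add h2).add h3
  -- boundary integrability
  have ib2 : ∀ θ : ℝ, IntegrableOn (fun x => (S θ x)^2) (frontier D.Ω) μH[1] :=
    fun θ => integrableOn_of_compact_finite hΓcomp hΓmeas hΓfin
      (((cS θ).mono ((hUθsub θ).trans' frontier_subset_closure)).pow 2)
  have ib4 : ∀ θ : ℝ, IntegrableOn (fun x =>
      S θ x * ((A θ x + ν) * (g x - S θ x) + ⟪C θ x, nml D x⟫)) (frontier D.Ω) μH[1] := by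
    intro θ
    refine integrableOn_of_compact_finite hΓcomp hΓmeas hΓfin ?_
    have hsub1 : frontier D.Ω ⊆ {x : E2 | (θ, x) ∈ U} :=
      (hUθsub θ).trans' frontier_subset_closure
    have hsub2 : frontier D.Ω ⊆ {x : E2 | (θ, x) ∈ UA} :=
      (fun x hx => hmemUA θ x (frontier_subset_closure hx))
    exact ((cS θ).mono hsub1).mul (((((cA θ).mono hsub2).add continuousOn_const).mul
      ((hg.continuousOn).sub ((cS θ).mono hsub1))).add
      (((cC θ).mono hsub2).inner hnml_cont))
  -- energy estimate per θ
  have energy : ∀ θ : ℝ,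
      ν/2 * ((∫ x in D.Ω, ‖gradient (S θ) x‖^2)
          + ∫ x in frontier D.Ω, (S θ x)^2 ∂μH[1])
        ≤ K1 - ε ^ i * ∫ x in D.Ω, S θ x * deriv (fun s => S s x) θ := by
    intro θ
    have h_eq := hdiv (fun y => S θ y • ((A θ y + ν) • gradient (S θ) y + C θ y))
      ⟨{x : E2 | (θ, x) ∈ W}, hWθo θ, hWθsub θ, hFθ θ⟩
    have hL : (∫ x in D.Ω,
        vdiv (fun y => S θ y • ((A θ y + ν) • gradient (S θ) y + C θ y)) x)
        = ∫ x in D.Ω, ((A θ x + ν) * ‖gradient (S θ) x‖^2 + ⟪gradient (S θ) x, C θ x⟫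
          + ε ^ i * (μ * S θ x ^ 2 + S θ x * deriv (fun s => S s x) θ)) :=
      setIntegral_congr_fun hΩmeas (fun x hx => hvdivF θ x hx)
    have hR : (∫ x in frontier D.Ω,
        ⟪(fun y => S θ y • ((A θ y + ν) • gradient (S θ) y + C θ y)) x, nml D x⟫ ∂μH[1])
        = ∫ x in frontier D.Ω,
            (S θ x * ((A θ x + ν) * (g x - S θ x) + ⟪C θ x, nml D x⟫)) ∂μH[1] :=
      setIntegral_congr_fun hΓmeas (fun x hx => hbnd θ x hx)
    have ja : Integrable (fun x => ν/2 * ‖gradient (S θ) x‖^2) (volume.restrict D.Ω) :=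
      (i1 θ).const_mul _
    have jb : Integrable (fun _ : E2 => γ^2/(2*ν)) (volume.restrict D.Ω) :=
      integrableOn_const hΩfin.ne
    have jc : Integrable (fun x => ε ^ i * μ * S θ x ^ 2) (volume.restrict D.Ω) :=
      (i2 θ).const_mul _
    have jd : Integrable (fun x => ε ^ i * (S θ x * deriv (fun s => S s x) θ))
        (volume.restrict D.Ω) := (i3 θ).const_mul _
    have jab : Integrable (fun x => ν/2 * ‖gradient (S θ) x‖^2 - γ^2/(2*ν))
        (volume.restrict D.Ω) := ja.sub jb
    have jcd : Integrable (fun x => ε ^ i * μ * S θ x ^ 2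
        + ε ^ i * (S θ x * deriv (fun s => S s x) θ)) (volume.restrict D.Ω) := jc.add jd
    have hlowint : Integrable (fun x => ν/2 * ‖gradient (S θ) x‖^2 - γ^2/(2*ν)
        + (ε ^ i * μ * S θ x ^ 2 + ε ^ i * (S θ x * deriv (fun s => S s x) θ)))
        (volume.restrict D.Ω) := jab.add jcd
    have hmono1 : (∫ x in D.Ω, (ν/2 * ‖gradient (S θ) x‖^2 - γ^2/(2*ν)
        + (ε ^ i * μ * S θ x ^ 2 + ε ^ i * (S θ x * deriv (fun s => S s x) θ))))
        ≤ ∫ x in D.Ω, ((A θ x + ν) * ‖gradient (S θ) x‖^2 + ⟪gradient (S θ) x, C θ x⟫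
          + ε ^ i * (μ * S θ x ^ 2 + S θ x * deriv (fun s => S s x) θ)) := by
      refine setIntegral_mono_on hlowint (i4 θ) hΩmeas ?_
      intro x hx
      have hA := hAbd (θ, x) (hmemUA θ x (subset_closure hx))
      have hC := hCbd (θ, x) (hmemUA θ x (subset_closure hx))
      simp only at hA hC
      have hG := norm_nonneg (gradient (S θ) x)
      have h1 : |⟪gradient (S θ) x, C θ x⟫| ≤ ‖gradient (S θ) x‖ * ‖C θ x‖ :=
        abs_real_inner_le_norm _ _
      have h2 : ‖gradient (S θ) x‖ * ‖C θ x‖ ≤ ‖gradient (S θ) x‖ * γ :=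
        mul_le_mul_of_nonneg_left hC hG
      have h3 : -(‖gradient (S θ) x‖ * γ) ≤ ⟪gradient (S θ) x, C θ x⟫ := by
        have := neg_abs_le ⟪gradient (S θ) x, C θ x⟫
        linarith
      have h4 : ‖gradient (S θ) x‖ * γ ≤ ν/2 * ‖gradient (S θ) x‖^2 + γ^2/(2*ν) :=
        young ν _ γ hν
      nlinarith [mul_nonneg hA.1 (sq_nonneg ‖gradient (S θ) x‖)]
    have hsplit : (∫ x in D.Ω, (ν/2 * ‖gradient (S θ) x‖^2 - γ^2/(2*ν)
        + (ε ^ i * μ * S θ x ^ 2 + ε ^ i * (S θ x * deriv (fun s => S s x) θ))))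
        = ν/2 * (∫ x in D.Ω, ‖gradient (S θ) x‖^2)
          - γ^2/(2*ν) * (volume D.Ω).toReal
          + (ε ^ i * μ * (∫ x in D.Ω, S θ x ^ 2)
            + ε ^ i * (∫ x in D.Ω, S θ x * deriv (fun s => S s x) θ)) := by
      rw [integral_add jab jcd, integral_sub ja jb, integral_add jc jd,
        integral_const_mul, integral_const_mul, integral_const_mul, setIntegral_const,
        smul_eq_mul, measureReal_def, mul_comm ((volume D.Ω).toReal) (γ^2/(2*ν))]
    have kb2 : Integrable (fun x => -(ν/2) * S θ x ^ 2)
        ((μH[1] : Measure E2).restrict (frontier D.Ω)) := (ib2 θ).const_mul _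
    have kbc : Integrable (fun _ : E2 => c1)
        ((μH[1] : Measure E2).restrict (frontier D.Ω)) := integrable_const c1
    have hb2 : Integrable (fun x => -(ν/2) * S θ x ^ 2 + c1)
        ((μH[1] : Measure E2).restrict (frontier D.Ω)) := kb2.add kbc
    have hmono2 : (∫ x in frontier D.Ω,
          (S θ x * ((A θ x + ν) * (g x - S θ x) + ⟪C θ x, nml D x⟫)) ∂μH[1])
        ≤ ∫ x in frontier D.Ω, (-(ν/2) * S θ x ^ 2 + c1) ∂μH[1] := by
      refine setIntegral_mono_on (ib4 θ) hb2 hΓmeas ?_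
      intro x hx
      have hA := hAbd (θ, x) (hmemUA θ x (frontier_subset_closure hx))
      have hC := hCbd (θ, x) (hmemUA θ x (frontier_subset_closure hx))
      simp only at hA hC
      have hCn : |⟪C θ x, nml D x⟫| ≤ γ := by
        have h1 : |⟪C θ x, nml D x⟫| ≤ ‖C θ x‖ * ‖nml D x‖ := abs_real_inner_le_norm _ _
        rw [hnml_norm x hx, mul_one] at h1
        linarith
      have hsG : S θ x * g x ≤ |S θ x| * M := by
        calc S θ x * g x ≤ |S θ x * g x| := le_abs_self _
          _ = |S θ x| * |g x| := abs_mul _ _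
          _ ≤ |S θ x| * M := mul_le_mul_of_nonneg_left (hgM x) (abs_nonneg _)
      have t1 : S θ x * ⟪C θ x, nml D x⟫ ≤ |S θ x| * γ := by
        calc S θ x * ⟪C θ x, nml D x⟫ ≤ |S θ x * ⟪C θ x, nml D x⟫| := le_abs_self _
          _ = |S θ x| * |⟪C θ x, nml D x⟫| := abs_mul _ _
          _ ≤ |S θ x| * γ := mul_le_mul_of_nonneg_left hCn (abs_nonneg _)
      have t2 : S θ x * ((A θ x + ν) * (g x - S θ x))
          ≤ (γ + ν) * M * |S θ x| - ν * S θ x ^ 2 := by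
        nlinarith [hsG, hA.1, hA.2, mul_nonneg hA.1 (sq_nonneg (S θ x)),
          abs_nonneg (S θ x), sq_abs (S θ x), hν.le, hMnn,
          mul_nonneg (abs_nonneg (S θ x)) hMnn]
      have t3 : |S θ x| * ((γ + ν) * M + γ)
          ≤ ν/2 * S θ x ^ 2 + ((γ + ν) * M + γ)^2/(2*ν) := by
        have h := young ν |S θ x| ((γ + ν) * M + γ) hν
        rwa [sq_abs] at h
      rw [hc1def]
      nlinarith [t1, t2, t3, sq_abs (S θ x)]
    have hbsplit : (∫ x in frontier D.Ω, (-(ν/2) * S θ x ^ 2 + c1) ∂μH[1])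
        = -(ν/2) * (∫ x in frontier D.Ω, S θ x ^ 2 ∂μH[1])
          + c1 * (μH[1] (frontier D.Ω)).toReal := by
      rw [integral_add kb2 kbc, integral_const_mul, setIntegral_const, smul_eq_mul, measureReal_def,
        mul_comm ((μH[1] (frontier D.Ω)).toReal) c1]
    have e1 := (hL.symm.trans h_eq).trans hR
    have hfull := (hmono1.trans (le_of_eq e1)).trans hmono2
    rw [hsplit, hbsplit] at hfull
    have hQnn : 0 ≤ ∫ x in D.Ω, S θ x ^ 2 := integral_nonneg (fun x => sq_nonneg _)
    have hμQ : 0 ≤ ε ^ i * μ * (∫ x in D.Ω, S θ x ^ 2) :=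
      mul_nonneg (mul_nonneg hη0.le hμ.le) hQnn
    rw [hK1def]
    linarith [hfull, hμQ]
  -- Friedrichs and per-θ key bound
  have key : ∀ θ : ℝ,
      (∫ x in D.Ω, ((S θ x) ^ 2 + ‖gradient (S θ) x‖ ^ 2))
        ≤ c2 * K1 - c2 * ε ^ i * (∫ x in D.Ω, S θ x * deriv (fun s => S s x) θ) := by
    intro θ
    have hF := hCF.2 (S θ) ⟨{x : E2 | (θ, x) ∈ U}, hUθo θ, hUθsub θ, (hSx θ).of_le one_le_two⟩
    have hE := energy θ
    have hsum : (∫ x in D.Ω, ((S θ x) ^ 2 + ‖gradient (S θ) x‖ ^ 2))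
        = (∫ x in D.Ω, (S θ x) ^ 2) + ∫ x in D.Ω, ‖gradient (S θ) x‖ ^ 2 :=
      integral_add (i2 θ) (i1 θ)
    have hBnn : 0 ≤ ∫ x in frontier D.Ω, (S θ x)^2 ∂μH[1] :=
      integral_nonneg (fun x => sq_nonneg _)
    have hPnn : 0 ≤ ∫ x in D.Ω, ‖gradient (S θ) x‖^2 :=
      integral_nonneg (fun x => sq_nonneg _)
    have hmulE := mul_le_mul_of_nonneg_left hE hc2nn
    have hid : c2 * ν * ((∫ x in D.Ω, ‖gradient (S θ) x‖^2)
          + ∫ x in frontier D.Ω, (S θ x)^2 ∂μH[1])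
        = (2*CF + 2) * ((∫ x in D.Ω, ‖gradient (S θ) x‖^2)
          + ∫ x in frontier D.Ω, (S θ x)^2 ∂μH[1]) := by rw [hc2ν]
    rw [hsum]
    nlinarith [hmulE, hid, hF, hBnn, hPnn, hCF.1,
      mul_nonneg hCF.1.le hBnn, mul_nonneg hCF.1.le hPnn]
  -- joint continuity and product integrability
  have hjS : ContinuousOn (fun p : ℝ × E2 => S p.1 p.2) U := hSc.continuousOn
  have hjg : ContinuousOn (fun p : ℝ × E2 => gradient (S p.1) p.2) U :=
    contOn_gradient_slice hUo hSc
  have hjd : ContinuousOn (fun p : ℝ × E2 => deriv (fun s => S s p.2) p.1) U :=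
    contOn_deriv_slice hUo hSc
  have hIccsub : (Set.Icc (0:ℝ) 1) ×ˢ closure D.Ω ⊆ U :=
    fun p hp => hUsub ⟨mem_univ _, hp.2⟩
  have hPL : Integrable (fun p : ℝ × E2 => S p.1 p.2 ^ 2 + ‖gradient (S p.1) p.2‖ ^ 2)
      ((volume.restrict (Set.Ioc (0:ℝ) 1)).prod (volume.restrict D.Ω)) :=
    integrable_prod_of_contOn D.bounded hIccsub ((hjS.pow 2).add (hjg.norm.pow 2))
  have hPR : Integrable (fun p : ℝ × E2 => S p.1 p.2 * deriv (fun s => S s p.2) p.1)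
      ((volume.restrict (Set.Ioc (0:ℝ) 1)).prod (volume.restrict D.Ω)) :=
    integrable_prod_of_contOn D.bounded hIccsub (hjS.mul hjd)
  have hLI : IntervalIntegrable
      (fun θ => ∫ x in D.Ω, ((S θ x) ^ 2 + ‖gradient (S θ) x‖ ^ 2)) volume 0 1 := by
    rw [intervalIntegrable_iff, uIoc_of_le zero_le_one]
    exact hPL.integral_prod_left
  have hRI : IntervalIntegrable
      (fun θ => ∫ x in D.Ω, S θ x * deriv (fun s => S s x) θ) volume 0 1 := by
    rw [intervalIntegrable_iff, uIoc_of_le zero_le_one]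
    exact hPR.integral_prod_left
  -- the periodic term integrates to zero
  have hRzero : (∫ θ in (0:ℝ)..1, ∫ x in D.Ω, S θ x * deriv (fun s => S s x) θ) = 0 := by
    rw [intervalIntegral.integral_of_le zero_le_one]
    have hswap := integral_integral_swap
      (f := fun θ (x : E2) => S θ x * deriv (fun s => S s x) θ)
      (μ := volume.restrict (Set.Ioc (0:ℝ) 1)) (ν := volume.restrict D.Ω) hPR
    rw [hswap]
    have hinner : ∀ x ∈ D.Ω,
        (∫ θ in Set.Ioc (0:ℝ) 1, S θ x * deriv (fun s => S s x) θ) = 0 := by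
      intro x hx
      have hxc : x ∈ closure D.Ω := subset_closure hx
      rw [← intervalIntegral.integral_of_le zero_le_one]
      have hder : ∀ t ∈ uIcc (0:ℝ) 1,
          HasDerivAt (fun s => S s x ^ 2 / 2) (S t x * deriv (fun s => S s x) t) t := by
        intro t _
        have hd : DifferentiableAt ℝ (fun p : ℝ × E2 => S p.1 p.2) (t, x) :=
          ((hSc.contDiffAt (hUo.mem_nhds (hmemU t x hxc))).differentiableAt one_ne_zero)
        have h1 : HasDerivAt (fun s => S s x)
            (fderiv ℝ (fun p : ℝ × E2 => S p.1 p.2) (t, x) (1, 0)) t := slice_hasDerivAt hd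
        have h3 := (h1.fun_pow 2).div_const 2
        refine h3.congr_deriv ?_
        rw [h1.deriv]
        ring
      have hcg : ContinuousOn (fun t : ℝ => S t x * deriv (fun s => S s x) t)
          (uIcc (0:ℝ) 1) := by
        have h := (hjS.mul hjd).comp
          ((continuous_id.prodMk continuous_const).continuousOn :
            ContinuousOn (fun t : ℝ => (t, x)) (uIcc (0:ℝ) 1))
          (fun t _ => hmemU t x hxc)
        exact h.congr (fun t ht => rfl)
      rw [intervalIntegral.integral_eq_sub_of_hasDerivAt hder hcg.intervalIntegrable]
      have hp : S 1 x = S 0 x := by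
        have := hSper 0 x
        rwa [zero_add] at this
      rw [hp, sub_self]
    rw [setIntegral_congr_fun hΩmeas hinner, integral_zero]
  -- conclusion
  have hRIc : IntervalIntegrable
      (fun θ => c2 * K1 - c2 * ε ^ i * (∫ x in D.Ω, S θ x * deriv (fun s => S s x) θ))
      volume 0 1 := (intervalIntegrable_const).sub (hRI.const_mul _)
  calc (∫ θ in (0:ℝ)..1, ∫ x in D.Ω, ((S θ x) ^ 2 + ‖gradient (S θ) x‖ ^ 2))
      ≤ ∫ θ in (0:ℝ)..1,
          (c2 * K1 - c2 * ε ^ i * (∫ x in D.Ω, S θ x * deriv (fun s => S s x) θ)) :=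
        intervalIntegral.integral_mono_on zero_le_one hLI hRIc (fun θ _ => key θ)
    _ = c2 * K1 := by
        rw [intervalIntegral.integral_sub intervalIntegrable_const (hRI.const_mul _),
          intervalIntegral.integral_const, intervalIntegral.integral_const_mul, hRzero]
        simp

end
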